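/- For every x ∈ c, the set of best approximations of x from c₀ is P_{c₀}(x) = {y ∈ c₀ : ‖x − y‖ = |L(x)|}. In particular, h(x) = x − β_{L(x)} ∈ P_{c₀}(x), and for every real b ≠ 0, P_{c₀}(β_b) = {y ∈ c₀ : ‖β_b − y‖ = |b|}. -/

import Mathlib

open scoped ENNReal
open Filter

/-- The real Banach space `ℓ∞` of bounded real sequences; the space `c` of convergent
sequences and its subspace `c₀` are regarded as subsets of `ℓ∞`, with the sup norm. -/
noncomputable abbrev ellInfty : Type := lp (fun _ : ℕ => ℝ) ∞

/-- The constant sequence `β_b = (b, b, b, …)`. -/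
noncomputable def betaSeq (b : ℝ) : ellInfty :=
  ⟨fun _ => b, memℓp_infty (bddAbove_singleton.mono Set.range_const_subset)⟩

/-- The space `c` of convergent real sequences, as a subset of `ℓ∞`. -/
def cSpace : Set ellInfty := {x | ∃ L : ℝ, Tendsto (x : ℕ → ℝ) atTop (nhds L)}

/-- The subspace `c₀` of sequences converging to `0`. -/
def c0 : Set ellInfty := {x | Tendsto (x : ℕ → ℝ) atTop (nhds 0)}

/-- The set of best approximations of `x` from `c₀`:
`P_{c₀}(x) = {u ∈ c₀ : ‖x − u‖ ≤ ‖x − z‖ for all z ∈ c₀}`. -/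
def projC0 (x : ellInfty) : Set ellInfty :=
  {u | u ∈ c0 ∧ ∀ z ∈ c0, ‖x - u‖ ≤ ‖x - z‖}


set_option synthInstance.maxHeartbeats 1000000
set_option maxHeartbeats 1000000

lemma norm_beta (b : ℝ) : ‖betaSeq b‖ = |b| := by
  apply le_antisymm
  · exact lp.norm_le_of_forall_le (abs_nonneg b) fun i => le_of_eq (Real.norm_eq_abs b)
  · exact lp.norm_apply_le_norm ENNReal.top_ne_zero (betaSeq b) 0

lemma abs_le_norm_sub {x : ellInfty} {L : ℝ} (hx : Tendsto (x : ℕ → ℝ) atTop (nhds L))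
    {z : ellInfty} (hz : z ∈ c0) : |L| ≤ ‖x - z‖ := by
  have h1 : Tendsto (fun n => |(x : ℕ → ℝ) n - (z : ℕ → ℝ) n|) atTop (nhds |L|) := by
    simpa using ((hx.sub hz).abs)
  refine le_of_tendsto h1 (Filter.Eventually.of_forall fun n => ?_)
  simpa [Real.norm_eq_abs] using lp.norm_apply_le_norm ENNReal.top_ne_zero (x - z) n

lemma key_proj (x : ellInfty) (L : ℝ) (hx : Tendsto (x : ℕ → ℝ) atTop (nhds L)) :
    (projC0 x = {y | y ∈ c0 ∧ ‖x - y‖ = |L|}) ∧ (x - betaSeq L ∈ projC0 x) := by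
  have hmem : x - betaSeq L ∈ c0 := by
    have : Tendsto (fun n => (x : ℕ → ℝ) n - L) atTop (nhds 0) := by
      simpa using hx.sub (tendsto_const_nhds (x := L))
    exact this
  have hnorm : ‖x - (x - betaSeq L)‖ = |L| := by
    rw [sub_sub_cancel, norm_beta]
  have hbest : x - betaSeq L ∈ projC0 x :=
    ⟨hmem, fun z hz => hnorm ▸ abs_le_norm_sub hx hz⟩
  refine ⟨Set.ext fun u => ?_, hbest⟩
  constructor
  · rintro ⟨hu, hle⟩
    exact ⟨hu, le_antisymm (hnorm ▸ hle _ hmem) (abs_le_norm_sub hx hu)⟩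
  · rintro ⟨hu, heq⟩
    exact ⟨hu, fun z hz => heq ▸ abs_le_norm_sub hx hz⟩

/-- Proposition 4.3. For every `x ∈ c` with limit `L = L(x)`, the set of
best approximations of `x` from `c₀` is `P_{c₀}(x) = {y ∈ c₀ : ‖x − y‖ = |L(x)|}`.
In particular `h(x) = x − β_{L(x)} ∈ P_{c₀}(x)`, and for every real `b ≠ 0`,
`P_{c₀}(β_b) = {y ∈ c₀ : ‖β_b − y‖ = |b|}`. -/
theorem stmt_10 (x : ellInfty) (L : ℝ) (hx : Tendsto (x : ℕ → ℝ) atTop (nhds L)) :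
    (projC0 x = {y | y ∈ c0 ∧ ‖x - y‖ = |L|}) ∧
    (x - betaSeq L ∈ projC0 x) ∧
    (∀ b : ℝ, b ≠ 0 → projC0 (betaSeq b) = {y | y ∈ c0 ∧ ‖betaSeq b - y‖ = |b|}) := by
  obtain ⟨h1, h2⟩ := key_proj x L hx
  refine ⟨h1, h2, fun b _ => ?_⟩
  exact (key_proj (betaSeq b) b (by simpa [betaSeq] using tendsto_const_nhds (x := b))).1
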